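/- Let f, g : S^{n-1} → R be 1-Lipschitz functions with values bounded in absolute value by 1. Then there is a constant C depending only on n such that the sup-norm of f - g is at most C times the L²-norm of f - g raised to the power 2/(n+1). -/

import Mathlib

open MeasureTheory Metric Set
open scoped Pointwise ENNReal

lemma sector_incl (n : ℕ) (x : sphere (0 : EuclideanSpace ℝ (Fin n)) 1)
    (r ρ c : ℝ) (hρ : 0 < ρ) (hρr : 4 * ρ ≤ r) (hc : 1/2 ≤ c) (hc1 : c + ρ < 1) :
    Metric.ball (c • (x : EuclideanSpace ℝ (Fin n))) ρ ⊆
      Ioo (0:ℝ) 1 • (Subtype.val '' (ball x r)) := by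
  intro z hz
  have hx : ‖(x : EuclideanSpace ℝ (Fin n))‖ = 1 := norm_eq_of_mem_sphere x
  have hzc : ‖z - c • (x : EuclideanSpace ℝ (Fin n))‖ < ρ := by
    rwa [mem_ball, dist_eq_norm] at hz
  have hcpos : 0 < c := lt_of_lt_of_le (by norm_num) hc
  have hnc : ‖c • (x : EuclideanSpace ℝ (Fin n))‖ = c := by
    rw [norm_smul, hx, Real.norm_eq_abs, abs_of_pos hcpos, mul_one]
  have hzn : |c - ‖z‖| < ρ := by
    calc |c - ‖z‖| = |‖c • (x : EuclideanSpace ℝ (Fin n))‖ - ‖z‖| := by rw [hnc]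
    _ ≤ ‖c • (x : EuclideanSpace ℝ (Fin n)) - z‖ := abs_norm_sub_norm_le _ _
    _ = ‖z - c • (x : EuclideanSpace ℝ (Fin n))‖ := norm_sub_rev _ _
    _ < ρ := hzc
  have habs := abs_lt.1 hzn
  have hz0 : 0 < ‖z‖ := by nlinarith
  have hz1 : ‖z‖ < 1 := by nlinarith
  set y : EuclideanSpace ℝ (Fin n) := ‖z‖⁻¹ • z with hy
  have hyn : ‖y‖ = 1 := by
    rw [hy, norm_smul, Real.norm_eq_abs, abs_of_pos (inv_pos.2 hz0), inv_mul_cancel₀ hz0.ne']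
  have hysphere : y ∈ sphere (0 : EuclideanSpace ℝ (Fin n)) 1 := by
    simpa [mem_sphere_iff_norm] using hyn
  have h1 : ‖y - c⁻¹ • z‖ = |c - ‖z‖| / c := by
    rw [hy, ← sub_smul, norm_smul, Real.norm_eq_abs,
      show ‖z‖⁻¹ - c⁻¹ = (c - ‖z‖)/(‖z‖*c) by field_simp,
      abs_div, abs_of_pos (mul_pos hz0 hcpos)]
    field_simp
  have h2 : ‖c⁻¹ • z - (x : EuclideanSpace ℝ (Fin n))‖
      = ‖z - c • (x:EuclideanSpace ℝ (Fin n))‖ / c := by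
    rw [show c⁻¹ • z - (x : EuclideanSpace ℝ (Fin n))
          = c⁻¹ • (z - c • (x:EuclideanSpace ℝ (Fin n))) by
        rw [smul_sub, smul_smul, inv_mul_cancel₀ hcpos.ne', one_smul]]
    rw [norm_smul, Real.norm_eq_abs, abs_of_pos (inv_pos.2 hcpos)]
    field_simp
  have hdist : ‖y - (x : EuclideanSpace ℝ (Fin n))‖ < r := by
    calc ‖y - (x : EuclideanSpace ℝ (Fin n))‖
        ≤ ‖y - c⁻¹ • z‖ + ‖c⁻¹ • z - (x : EuclideanSpace ℝ (Fin n))‖ :=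
          norm_sub_le_norm_sub_add_norm_sub _ _ _
      _ = (|c - ‖z‖| + ‖z - c • (x:EuclideanSpace ℝ (Fin n))‖) / c := by rw [h1, h2]; ring
      _ < (ρ + ρ) / c := by gcongr
      _ ≤ 4 * ρ := by rw [div_le_iff₀ hcpos]; nlinarith
      _ ≤ r := hρr
  refine ⟨‖z‖, ⟨hz0, hz1⟩, y, ⟨⟨y, hysphere⟩, ?_, rfl⟩, smul_inv_smul₀ hz0.ne' z⟩
  rw [mem_ball, Subtype.dist_eq, dist_eq_norm]
  exact hdist

lemma sphere_ball_lb (n : ℕ) (hn : 2 ≤ n) (x : sphere (0 : EuclideanSpace ℝ (Fin n)) 1)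
    (r : ℝ) (hr : 0 < r) (hr2 : r ≤ 2) :
    ENNReal.ofReal
        ((volume (Metric.ball (0 : EuclideanSpace ℝ (Fin n)) 1)).toReal / 8 ^ n * r ^ (n - 1))
      ≤ (volume : Measure (EuclideanSpace ℝ (Fin n))).toSphere (Metric.ball x r) := by
  set E := EuclideanSpace ℝ (Fin n)
  have hx : ‖(x : E)‖ = 1 := norm_eq_of_mem_sphere x
  set μ : Measure E := volume with hμ
  set ω := μ (Metric.ball (0 : E) 1) with hω
  have hωtop : ω ≠ ⊤ := measure_ball_lt_top.ne
  have hωr0 : 0 ≤ ω.toReal := ENNReal.toReal_nonneg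
  set ρ := r / 8 with hρdef
  have hρ : 0 < ρ := by positivity
  have hρ4 : ρ ≤ 1/4 := by rw [hρdef]; linarith
  set K := ⌊2 / r⌋₊ with hK
  have h2r : (1:ℝ) ≤ 2 / r := (le_div_iff₀ hr).2 (by linarith)
  have hK1 : 1 ≤ K := Nat.le_floor (by exact_mod_cast h2r)
  have hKle : (K:ℝ) ≤ 2 / r := Nat.floor_le (by linarith)
  have hKr : (K:ℝ) * r ≤ 2 := (le_div_iff₀ hr).1 hKle
  have hKρ : (K:ℝ) * ρ ≤ 1/4 := by rw [hρdef]; linarith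
  have hKgt : 1 < (K:ℝ) * r := by
    have h1 : 2 / r < (K:ℝ) + 1 := by rw [hK]; exact_mod_cast Nat.lt_floor_add_one (2 / r)
    have h1' : 2 < ((K:ℝ)+1) * r := (div_lt_iff₀ hr).1 h1
    have h2 : (1:ℝ) ≤ K := by exact_mod_cast hK1
    nlinarith [mul_le_mul_of_nonneg_right h2 hr.le]
  haveI : Nontrivial E :=
    Module.nontrivial_of_finrank_pos (R := ℝ) (by rw [finrank_euclideanSpace_fin]; omega)
  set B : ℕ → Set E := fun k => Metric.ball ((1/2 + 2*k*ρ) • (x : E)) ρ with hB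
  have hincl : ∀ k < K, B k ⊆ Ioo (0:ℝ) 1 • (Subtype.val '' (Metric.ball x r)) := by
    intro k hk
    have hkK : (k:ℝ) + 1 ≤ K := by exact_mod_cast hk
    refine sector_incl n x r ρ _ hρ (by rw [hρdef]; linarith)
      (le_add_of_nonneg_right (by positivity)) ?_
    nlinarith [mul_le_mul_of_nonneg_right (show (k:ℝ) ≤ (K:ℝ) - 1 by linarith) hρ.le]
  -- disjointness
  have hdisj : (↑(Finset.range K) : Set ℕ).PairwiseDisjoint B := by
    intro j _ k _ hjk
    apply ball_disjoint_ball
    rw [dist_eq_norm, ← sub_smul, norm_smul, hx, mul_one, Real.norm_eq_abs]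
    have h1 : (1:ℝ) ≤ |(j:ℝ) - (k:ℝ)| := by
      rcases hjk.lt_or_gt with h | h
      · rw [abs_sub_comm, abs_of_pos (by exact_mod_cast sub_pos.2 (show (j:ℝ) < k by exact_mod_cast h))]
        have : (j:ℝ) + 1 ≤ k := by exact_mod_cast h
        linarith
      · rw [abs_of_pos (sub_pos.2 (show (k:ℝ) < j by exact_mod_cast h))]
        have : (k:ℝ) + 1 ≤ j := by exact_mod_cast h
        linarith
    have : (1/2 + 2*(j:ℝ)*ρ) - (1/2 + 2*(k:ℝ)*ρ) = 2*ρ*((j:ℝ) - k) := by ring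
    rw [this, abs_mul, abs_of_pos (by positivity : (0:ℝ) < 2*ρ)]
    nlinarith
  -- measure of union
  have hmeas : μ (⋃ k ∈ Finset.range K, B k) = (K : ℝ≥0∞) * (ENNReal.ofReal (ρ^n) * ω) := by
    rw [measure_biUnion_finset hdisj (fun k _ => measurableSet_ball)]
    have hball : ∀ k, μ (B k) = ENNReal.ofReal (ρ^n) * ω := by
      intro k
      rw [hB]
      simp only
      rw [Measure.addHaar_ball μ _ hρ.le, finrank_euclideanSpace_fin]
    simp only [hball, Finset.sum_const, Finset.card_range, nsmul_eq_mul]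
  -- conclude
  have hsub : (⋃ k ∈ Finset.range K, B k) ⊆ Ioo (0:ℝ) 1 • (Subtype.val '' (Metric.ball x r)) := by
    intro z hz
    simp only [Finset.mem_range, mem_iUnion] at hz
    obtain ⟨k, hk, hzk⟩ := hz
    exact hincl k hk hzk
  have hsphere : μ.toSphere (Metric.ball x r)
      = (Module.finrank ℝ E : ℝ≥0∞) * μ (Ioo (0:ℝ) 1 • (Subtype.val '' (Metric.ball x r))) := by
    simpa using μ.toSphere_apply' measurableSet_ball
  have key : ω.toReal / 8 ^ n * r ^ (n - 1) ≤ (K:ℝ) * (ρ^n * ω.toReal) := by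
    have hrn : r^n = r^(n-1) * r := by rw [← pow_succ, Nat.sub_add_cancel (by omega)]
    have hρn : ρ^n = r^n / 8^n := by rw [hρdef, div_pow]
    rw [hρn, hrn]
    have h := mul_le_mul_of_nonneg_right hKgt.le
      (show (0:ℝ) ≤ r^(n-1) * (ω.toReal/8^n) by positivity)
    ring_nf at h ⊢
    linarith [h]
  calc ENNReal.ofReal (ω.toReal / 8 ^ n * r ^ (n - 1))
      ≤ ENNReal.ofReal ((K:ℝ) * (ρ^n * ω.toReal)) := ENNReal.ofReal_le_ofReal key
    _ = (K : ℝ≥0∞) * (ENNReal.ofReal (ρ^n) * ω) := by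
        rw [ENNReal.ofReal_mul (Nat.cast_nonneg K), ENNReal.ofReal_mul (by positivity),
          ENNReal.ofReal_natCast, ENNReal.ofReal_toReal hωtop]
    _ = μ (⋃ k ∈ Finset.range K, B k) := hmeas.symm
    _ ≤ μ (Ioo (0:ℝ) 1 • (Subtype.val '' (Metric.ball x r))) := measure_mono hsub
    _ ≤ (Module.finrank ℝ E : ℝ≥0∞) * μ (Ioo (0:ℝ) 1 • (Subtype.val '' (Metric.ball x r))) := by
      apply le_mul_of_one_le_left (by simp)
      rw [show Module.finrank ℝ E = n from finrank_euclideanSpace_fin]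
      exact_mod_cast Nat.one_le_cast.2 (by omega)
    _ = μ.toSphere (Metric.ball x r) := hsphere.symm

/-- There is a constant `C = C(n)` such that for any `1`-Lipschitz functions `f, g` on the unit
sphere `S^{n-1} ⊂ ℝ^n` with `|f|, |g| ≤ 1`, one has
`‖f - g‖_{C⁰} ≤ C ‖f - g‖_{L²}^{2/(n+1)}`. -/
theorem stmt3 (n : ℕ) (hn : 2 ≤ n) :
    ∃ C : ℝ, 0 < C ∧
      ∀ f g : (sphere (0 : EuclideanSpace ℝ (Fin n)) 1) → ℝ,
        LipschitzWith 1 f → LipschitzWith 1 g →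
        (∀ x, |f x| ≤ 1) → (∀ x, |g x| ≤ 1) →
        ∀ x, |f x - g x| ≤
          C * (∫ y, (f y - g y) ^ 2 ∂((volume : Measure (EuclideanSpace ℝ (Fin n))).toSphere))
              ^ ((1 : ℝ) / (n + 1)) := by
  set E := EuclideanSpace ℝ (Fin n)
  haveI : Nontrivial E :=
    Module.nontrivial_of_finrank_pos (R := ℝ) (by rw [finrank_euclideanSpace_fin]; omega)
  set σ : Measure (sphere (0:E) 1) := (volume : Measure E).toSphere with hσ
  set ωr : ℝ := (volume (Metric.ball (0 : E) 1)).toReal with hωr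
  have hωpos : 0 < ωr := ENNReal.toReal_pos (measure_ball_pos volume 0 one_pos).ne'
    measure_ball_lt_top.ne
  set c : ℝ := (ωr / 8 ^ n) / 4 ^ n with hc
  have hcpos : 0 < c := by positivity
  refine ⟨(1/c) ^ ((1:ℝ)/(n+1)), Real.rpow_pos_of_pos (by positivity) _, ?_⟩
  intro f g hf hg hf1 hg1 x
  set h : sphere (0:E) 1 → ℝ := fun y => f y - g y with hh
  have hlip : LipschitzWith 2 h := by
    have := hf.sub hg
    norm_num at this
    exact this
  have hcont : Continuous fun y => h y ^ 2 := ((hf.continuous.sub hg.continuous).pow 2)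
  have hint : Integrable (fun y => h y ^ 2) σ :=
    hcont.integrable_of_hasCompactSupport (HasCompactSupport.of_compactSpace _)
  set I : ℝ := ∫ y, h y ^ 2 ∂σ with hI
  have hI0 : 0 ≤ I := integral_nonneg fun y => sq_nonneg _
  set a : ℝ := |f x - g x| with ha
  have ha0 : 0 ≤ a := abs_nonneg _
  have ha2 : a ≤ 2 := by
    rw [ha]
    calc |f x - g x| ≤ |f x| + |g x| := abs_sub _ _
    _ ≤ 2 := by linarith [hf1 x, hg1 x]
  rcases eq_or_lt_of_le ha0 with haz | hapos
  · rw [← haz]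
    positivity
  -- key estimate : c * a^(n+1) ≤ I
  have key : c * a ^ (n+1) ≤ I := by
    set r : ℝ := a / 4 with hr
    have hrpos : 0 < r := by positivity
    have hr2 : r ≤ 2 := by rw [hr]; linarith
    set B := Metric.ball x r with hB
    have hBm : MeasurableSet B := measurableSet_ball
    have hBfin : σ B ≠ ∞ := measure_ne_top σ B
    have hlb : ωr / 8 ^ n * r ^ (n-1) ≤ (σ B).toReal := by
      have := sphere_ball_lb n hn x r hrpos hr2
      calc ωr / 8 ^ n * r ^ (n-1)
          = (ENNReal.ofReal (ωr / 8 ^ n * r ^ (n-1))).toReal :=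
            (ENNReal.toReal_ofReal (by positivity)).symm
        _ ≤ (σ B).toReal := ENNReal.toReal_mono hBfin this
    have hpt : ∀ y ∈ B, (a/2)^2 ≤ h y ^ 2 := by
      intro y hy
      have hd : dist y x < r := mem_ball.1 hy
      have hlb2 : a / 2 ≤ |h y| := by
        have h1 : dist (h x) (h y) ≤ 2 * dist x y := by
          have := hlip.dist_le_mul x y
          simpa using this
        have h2 : |h x - h y| ≤ 2 * dist x y := by rwa [Real.dist_eq] at h1
        have h3 : |h x| - |h y| ≤ |h x - h y| := abs_sub_abs_le_abs_sub _ _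
        have hax : |h x| = a := rfl
        rw [dist_comm] at hd
        nlinarith [abs_nonneg (h y)]
      calc (a/2)^2 ≤ |h y|^2 := by nlinarith
        _ = h y ^ 2 := sq_abs _
    have hlow : (a/2)^2 * (σ B).toReal ≤ ∫ y in B, h y ^ 2 ∂σ :=
      by
        have := setIntegral_ge_of_const_le_real hBm hBfin hpt hint.integrableOn
        rw [measureReal_def] at this
        exact this
    have hup : ∫ y in B, h y ^ 2 ∂σ ≤ I :=
      setIntegral_le_integral hint (Filter.Eventually.of_forall fun y => sq_nonneg _)
    have hchain : (a/2)^2 * (ωr / 8 ^ n * r ^ (n-1)) ≤ I := by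
      calc (a/2)^2 * (ωr / 8 ^ n * r ^ (n-1)) ≤ (a/2)^2 * (σ B).toReal := by
            apply mul_le_mul_of_nonneg_left hlb (by positivity)
        _ ≤ ∫ y in B, h y ^ 2 ∂σ := hlow
        _ ≤ I := hup
    have heq : c * a ^ (n+1) = (a/2)^2 * (ωr / 8 ^ n * r ^ (n-1)) := by
      rw [hc, hr, div_pow a 4 (n-1),
        show n + 1 = 2 + (n-1) by omega, pow_add,
        show (4:ℝ)^n = 4^(n-1) * 4 by rw [← pow_succ, Nat.sub_add_cancel (by omega)]]
      have h4 : (0:ℝ) < 4^(n-1) := by positivity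
      field_simp
      ring
    linarith [heq ▸ hchain]
  -- conclude via rpow
  have han : a ^ (n+1) ≤ I / c := (le_div_iff₀ hcpos).2 (by linarith [key, mul_comm c (a^(n+1))])
  have e_ne : ((n:ℝ) + 1) ≠ 0 := by positivity
  have step : a ≤ (I / c) ^ ((1:ℝ)/(n+1)) := by
    have : a = (a ^ (n+1) : ℝ) ^ ((1:ℝ)/(n+1)) := by
      rw [← Real.rpow_natCast a (n+1), ← Real.rpow_mul ha0]
      push_cast
      rw [mul_one_div, div_self e_ne, Real.rpow_one]
    rw [this]
    exact Real.rpow_le_rpow (by positivity) han (by positivity)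
  calc a ≤ (I / c) ^ ((1:ℝ)/(n+1)) := step
    _ = (1/c) ^ ((1:ℝ)/(n+1)) * I ^ ((1:ℝ)/(n+1)) := by
      rw [div_eq_mul_one_div I c, mul_comm I (1/c), Real.mul_rpow (by positivity) hI0]
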